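/- Let g be an analytic formal deformation of dimension n with associated algebras N_s and N := N_0. Suppose there exist elements x, y ∈ N such that N is spanned as a ℂ-vector space by the set {x^i : i ∈ ℕ} ∪ {y * x^i : i ∈ ℕ} (powers and products taken in N). Let A be a finite-dimensional semisimple ℂ-algebra with dim_ℂ A = n for which there exists a surjective ℂ-algebra homomorphism from A onto the matrix algebra Matrix (Fin j) (Fin j) ℂ for some j ≥ 3. Then the deformation is not strongly flat from N to A. -/

import Mathlib

open scoped BigOperators

/-- The structure-constant power series `g i j l` specialised (analytically) at `t = s`. -/
noncomputable def fconst {n : ℕ} (g : Fin n → Fin n → Fin n → PowerSeries ℂ) (s : ℝ) :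
    Fin n → Fin n → Fin n → ℂ :=
  fun i j l => ∑' m : ℕ, (PowerSeries.coeff m) (g i j l) * (s : ℂ) ^ m

/-- An analytic formal deformation of dimension `n`: structure constants `g i j l ∈ ℂ⟦t⟧`
with geometrically bounded coefficients, satisfying the associativity law and possessing
a unit vector `u`. -/
structure AnalyticDeformation (n : ℕ) where
  g : Fin n → Fin n → Fin n → PowerSeries ℂ
  u : Fin n → ℂ
  conv : ∀ i j l, ∃ C r : ℝ, 0 < C ∧ 0 < r ∧
    ∀ m : ℕ, ‖(PowerSeries.coeff m) (g i j l)‖ ≤ C * r ^ m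
  assoc : ∀ i j k m, ∑ l, g i j l * g l k m = ∑ l, g j k l * g i l m
  unit_left : ∀ j l, ∑ i, u i • g i j l = if j = l then (1 : PowerSeries ℂ) else 0
  unit_right : ∀ j l, ∑ i, u i • g j i l = if j = l then (1 : PowerSeries ℂ) else 0

/-- `N_s` is defined: all the structure-constant series converge at `t = s`. -/
def AnalyticDeformation.DefinedAt {n : ℕ} (D : AnalyticDeformation n) (s : ℝ) : Prop :=
  ∀ i j l, Summable (fun m : ℕ => (PowerSeries.coeff m) (D.g i j l) * (s : ℂ) ^ m)

/-- A unital associative `R`-algebra `B` realizes the structure constants `c` if it has a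
basis multiplying according to `c`; this expresses `B` being (isomorphic to) the algebra
with underlying space `Fin n → R`, multiplication `(x*y) l = ∑ i j, x i * y j * c i j l`. -/
def RealizesAlgebra {n : ℕ} (R : Type*) [CommRing R] (c : Fin n → Fin n → Fin n → R)
    (B : Type*) [Ring B] [Algebra R B] : Prop :=
  ∃ e : Module.Basis (Fin n) R B, ∀ i j, e i * e j = ∑ l, c i j l • e l

/-- `N_s` is defined and isomorphic to `A` as a `ℂ`-algebra. -/
def AnalyticDeformation.IsoAt {n : ℕ} (D : AnalyticDeformation n) (s : ℝ)
    (A : Type*) [Ring A] [Algebra ℂ A] : Prop :=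
  D.DefinedAt s ∧ RealizesAlgebra ℂ (fconst D.g s) A

/-- The deformation is strongly flat from `N = N_0` to `A`. -/
def AnalyticDeformation.StronglyFlat {n : ℕ} (D : AnalyticDeformation n)
    (A : Type*) [Ring A] [Algebra ℂ A] : Prop :=
  ∀ ε : ℝ, 0 < ε → ∃ s : ℝ, 0 < s ∧ s < ε ∧ D.IsoAt s A

noncomputable section StructAux

variable {n : ℕ}

/-- structure-constant multiplication on coordinate vectors -/
def mulc (c : Fin n → Fin n → Fin n → ℂ) (v w : Fin n → ℂ) : Fin n → ℂ :=
  fun l => ∑ i, ∑ jj, v i * w jj * c i jj l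

/-- coordinate vector of the k-th power of the element with coordinates `v` -/
def pwc (u : Fin n → ℂ) (c : Fin n → Fin n → Fin n → ℂ) (v : Fin n → ℂ) : ℕ → (Fin n → ℂ)
  | 0 => u
  | k+1 => mulc c v (pwc u c v k)

def colc (u : Fin n → ℂ) (c : Fin n → Fin n → Fin n → ℂ) (a b : Fin n → ℂ) :
    ℕ ⊕ ℕ → (Fin n → ℂ)
  | .inl i => pwc u c a i
  | .inr i => mulc c b (pwc u c a i)

def elemOf {B : Type*} [Ring B] (xB yB : B) : ℕ ⊕ ℕ → B
  | .inl i => xB ^ i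
  | .inr i => yB * xB ^ i

lemma continuous_mulc {α : Type*} [TopologicalSpace α] (v : Fin n → ℂ)
    {fc : α → (Fin n → Fin n → Fin n → ℂ)} {fw : α → (Fin n → ℂ)}
    (hc : Continuous fc) (hw : Continuous fw) :
    Continuous fun z => mulc (fc z) v (fw z) := by
  apply continuous_pi; intro l
  apply continuous_finset_sum; intro i _
  apply continuous_finset_sum; intro jj _
  exact (continuous_const.mul ((continuous_apply jj).comp hw)).mul
    ((continuous_apply l).comp ((continuous_apply jj).comp ((continuous_apply i).comp hc)))

lemma continuous_pwc (u v : Fin n → ℂ) (k : ℕ) :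
    Continuous fun c : Fin n → Fin n → Fin n → ℂ => pwc u c v k := by
  induction k with
  | zero => exact continuous_const
  | succ k ih => exact continuous_mulc v continuous_id ih

lemma continuous_colc (u a b : Fin n → ℂ) (t : ℕ ⊕ ℕ) :
    Continuous fun c : Fin n → Fin n → Fin n → ℂ => colc u c a b t := by
  cases t with
  | inl i => exact continuous_pwc u a i
  | inr i => exact continuous_mulc b continuous_id (continuous_pwc u a i)

section AlgebraSide

variable {B : Type*} [Ring B] [Algebra ℂ B] (e : Module.Basis (Fin n) ℂ B)
  (c : Fin n → Fin n → Fin n → ℂ)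

lemma sum_smul_mul (hc : ∀ i j, e i * e j = ∑ l, c i j l • e l) (v w : Fin n → ℂ) :
    (∑ i, v i • e i) * (∑ i, w i • e i) = ∑ l, mulc c v w l • e l := by
  rw [Finset.sum_mul]
  simp_rw [Finset.mul_sum, smul_mul_smul_comm, hc, Finset.smul_sum, smul_smul]
  simp only [mulc, Finset.sum_smul]
  calc ∑ i, ∑ jj, ∑ l, (v i * w jj * c i jj l) • e l
      = ∑ i, ∑ l, ∑ jj, (v i * w jj * c i jj l) • e l :=
        Finset.sum_congr rfl fun i _ => Finset.sum_comm
    _ = ∑ l, ∑ i, ∑ jj, (v i * w jj * c i jj l) • e l := Finset.sum_comm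

lemma repr_sum_smul (v : Fin n → ℂ) (l : Fin n) :
    e.repr (∑ i, v i • e i) l = v l := by
  simp [map_sum, Module.Basis.repr_self, Finsupp.single_apply]

lemma one_eq_sum (u : Fin n → ℂ) (hc : ∀ i j, e i * e j = ∑ l, c i j l • e l)
    (hu : ∀ j l, ∑ i, u i * c i j l = if j = l then (1:ℂ) else 0) :
    (1 : B) = ∑ i, u i • e i := by
  have hmul : ∀ jj, (∑ i, u i • e i) * e jj = e jj := by
    intro jj
    rw [Finset.sum_mul]
    simp_rw [smul_mul_assoc, hc, Finset.smul_sum, smul_smul]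
    rw [Finset.sum_comm]
    simp_rw [← Finset.sum_smul, hu]
    simp [Finset.sum_ite_eq]
  have h1 : (∑ i, u i • e i) * 1 = 1 := by
    conv_lhs => rw [show (1:B) = ∑ i, e.repr 1 i • e i from (e.sum_repr 1).symm]
    rw [Finset.mul_sum]
    simp_rw [mul_smul_comm, hmul]
    exact e.sum_repr 1
  calc (1:B) = (∑ i, u i • e i) * 1 := h1.symm
    _ = ∑ i, u i • e i := mul_one _

lemma elem_eq_sum (u : Fin n → ℂ) (hc : ∀ i j, e i * e j = ∑ l, c i j l • e l)
    (hu : ∀ j l, ∑ i, u i * c i j l = if j = l then (1:ℂ) else 0) (a b : Fin n → ℂ)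
    (t : ℕ ⊕ ℕ) :
    elemOf (∑ i, a i • e i) (∑ i, b i • e i) t = ∑ l, colc u c a b t l • e l := by
  have hpow : ∀ k : ℕ, (∑ i, a i • e i) ^ k = ∑ l, pwc u c a k l • e l := by
    intro k
    induction k with
    | zero => simpa [pwc] using one_eq_sum e c u hc hu
    | succ k ih =>
      rw [pow_succ', ih, sum_smul_mul e c hc]
      rfl
  cases t with
  | inl i => exact hpow i
  | inr i =>
    show (∑ i', b i' • e i') * ((∑ i', a i' • e i') ^ i) = _
    rw [hpow, sum_smul_mul e c hc]
    rfl

lemma toMatrix_eq (u : Fin n → ℂ) (hc : ∀ i j, e i * e j = ∑ l, c i j l • e l)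
    (hu : ∀ j l, ∑ i, u i * c i j l = if j = l then (1:ℂ) else 0) (a b : Fin n → ℂ)
    (τ : Fin n → ℕ ⊕ ℕ) :
    e.toMatrix (fun k => elemOf (∑ i, a i • e i) (∑ i, b i • e i) (τ k))
      = Matrix.of fun l k => colc u c a b (τ k) l := by
  ext l k
  rw [Module.Basis.toMatrix_apply, elem_eq_sum e c u hc hu a b (τ k)]
  exact repr_sum_smul e _ l

end AlgebraSide

end StructAux

section AnalyticAux

open Filter Set

lemma definedAt_zero {n : ℕ} (D : AnalyticDeformation n) : D.DefinedAt 0 := by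
  intro i jj l
  apply summable_of_ne_finset_zero (s := ({0} : Finset ℕ))
  intro m hm
  simp only [Finset.mem_singleton] at hm
  simp [zero_pow hm]

lemma fconst_zero {n : ℕ} (g : Fin n → Fin n → Fin n → PowerSeries ℂ) (i jj l : Fin n) :
    fconst g 0 i jj l = (PowerSeries.coeff 0) (g i jj l) := by
  have h : ∀ m : ℕ, m ≠ 0 → (PowerSeries.coeff m) (g i jj l) * (((0:ℝ)):ℂ) ^ m = 0 := by
    intro m hm; simp [zero_pow hm]
  rw [show fconst g 0 i jj l = ∑' m : ℕ, (PowerSeries.coeff m) (g i jj l) * (((0:ℝ)):ℂ) ^ m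
    from rfl, tsum_eq_single 0 h]
  simp

lemma fconst_unit {n : ℕ} (D : AnalyticDeformation n) {s : ℝ} (hs : D.DefinedAt s) :
    ∀ jj l, ∑ i, D.u i * fconst D.g s i jj l = if jj = l then (1:ℂ) else 0 := by
  intro jj l
  have h1 : ∑ i, D.u i * fconst D.g s i jj l
      = ∑ i, ∑' m : ℕ, D.u i * ((PowerSeries.coeff m) (D.g i jj l) * (s:ℂ) ^ m) := by
    refine Finset.sum_congr rfl fun i _ => ?_
    rw [show fconst D.g s i jj l = ∑' m : ℕ, (PowerSeries.coeff m) (D.g i jj l) * (s:ℂ) ^ m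
      from rfl, tsum_mul_left]
  have h2 : ∀ m : ℕ, ∑ i, D.u i * ((PowerSeries.coeff m) (D.g i jj l) * (s:ℂ) ^ m)
      = (PowerSeries.coeff m) (if jj = l then (1 : PowerSeries ℂ) else 0) * (s:ℂ) ^ m := by
    intro m
    rw [← D.unit_left jj l, map_sum, Finset.sum_mul]
    refine Finset.sum_congr rfl fun i _ => ?_
    rw [LinearMap.map_smul, smul_eq_mul]
    ring
  rw [h1, ← Summable.tsum_finsetSum (fun i _ => ((hs i jj l).mul_left _)), tsum_congr h2]
  by_cases hjl : jj = l
  · simp only [hjl, if_true, eq_self_iff_true]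
    have h3 : ∀ m : ℕ, m ≠ 0 →
        (PowerSeries.coeff m) (1 : PowerSeries ℂ) * (s:ℂ) ^ m = 0 := by
      intro m hm
      rw [PowerSeries.coeff_one, if_neg hm, zero_mul]
    rw [tsum_eq_single 0 h3, PowerSeries.coeff_one, if_pos rfl]
    simp
  · simp [hjl]

lemma tendsto_coeff_eval (a : ℕ → ℂ) (C r : ℝ) (hC : 0 < C) (hr : 0 < r)
    (hb : ∀ m, ‖a m‖ ≤ C * r ^ m) :
    Filter.Tendsto (fun s : ℝ => ∑' m : ℕ, a m * (s:ℂ) ^ m)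
      (nhdsWithin 0 (Set.Ioi 0)) (nhds (a 0)) := by
  rw [tendsto_iff_norm_sub_tendsto_zero]
  apply squeeze_zero' (g := fun s : ℝ => 2 * C * r * s)
  · filter_upwards with s using norm_nonneg _
  · have hmem : Set.Ioo (0:ℝ) (1/(2*r)) ∈ nhdsWithin (0:ℝ) (Set.Ioi 0) :=
      Ioo_mem_nhdsGT_of_mem ⟨le_refl _, by positivity⟩
    filter_upwards [hmem] with s hs
    obtain ⟨hs0, hs1⟩ := hs
    set q := r * s with hq
    have hq0 : 0 ≤ q := by positivity
    have hqh : q ≤ 1/2 := by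
      rw [hq]
      rw [lt_div_iff₀ (by positivity)] at hs1
      nlinarith
    have hq1 : q < 1 := lt_of_le_of_lt hqh (by norm_num)
    have hsnorm : ‖(s:ℂ)‖ = s := by
      rw [Complex.norm_real, Real.norm_eq_abs, abs_of_pos hs0]
    have hbound : ∀ m : ℕ, ‖a m * (s:ℂ) ^ m‖ ≤ C * q ^ m := by
      intro m
      rw [norm_mul, norm_pow, hsnorm]
      calc ‖a m‖ * s ^ m ≤ (C * r ^ m) * s ^ m :=
            mul_le_mul_of_nonneg_right (hb m) (by positivity)
        _ = C * q ^ m := by rw [hq, mul_pow]; ring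
    have hgeo : Summable (fun m : ℕ => C * q ^ m) :=
      (summable_geometric_of_lt_one hq0 hq1).mul_left C
    have hsum : Summable (fun m : ℕ => a m * (s:ℂ) ^ m) :=
      Summable.of_norm_bounded hgeo hbound
    have hzero : (∑' m : ℕ, a m * (s:ℂ) ^ m) - a 0 = ∑' m : ℕ, a (m+1) * (s:ℂ) ^ (m+1) := by
      rw [hsum.tsum_eq_zero_add]
      simp
    rw [hzero]
    have hgs : HasSum (fun m : ℕ => (C * q) * q ^ m) ((C * q) * (1 - q)⁻¹) :=
      (hasSum_geometric_of_lt_one hq0 hq1).mul_left (C * q)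
    have hle : ‖∑' m : ℕ, a (m+1) * (s:ℂ) ^ (m+1)‖ ≤ (C * q) * (1 - q)⁻¹ := by
      refine tsum_of_norm_bounded hgs fun m => ?_
      calc ‖a (m+1) * (s:ℂ) ^ (m+1)‖ ≤ C * q ^ (m+1) := hbound (m+1)
        _ = (C * q) * q ^ m := by rw [pow_succ]; ring
    have hinv : (1 - q)⁻¹ ≤ 2 := by
      have h2 : (1:ℝ)/2 ≤ 1 - q := by linarith
      calc (1 - q)⁻¹ ≤ ((1:ℝ)/2)⁻¹ := by
            apply inv_anti₀ (by norm_num) h2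
        _ = 2 := by norm_num
    calc ‖∑' m : ℕ, a (m+1) * (s:ℂ) ^ (m+1)‖ ≤ (C * q) * (1 - q)⁻¹ := hle
      _ ≤ (C * q) * 2 := by
          apply mul_le_mul_of_nonneg_left hinv (by positivity)
      _ = 2 * C * r * s := by rw [hq]; ring
  · have h : Filter.Tendsto (fun s : ℝ => 2 * C * r * s) (nhds 0) (nhds (2 * C * r * 0)) :=
      (continuous_const.mul continuous_id).tendsto 0
    simpa using h.mono_left nhdsWithin_le_nhds

lemma tendsto_fconst {n : ℕ} (D : AnalyticDeformation n) :
    Filter.Tendsto (fun s : ℝ => fconst D.g s) (nhdsWithin 0 (Set.Ioi 0))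
      (nhds (fconst D.g 0)) := by
  rw [tendsto_pi_nhds]; intro i
  rw [tendsto_pi_nhds]; intro jj
  rw [tendsto_pi_nhds]; intro l
  obtain ⟨C, r, hC, hr, hb⟩ := D.conv i jj l
  have h := tendsto_coeff_eval (fun m => (PowerSeries.coeff m) (D.g i jj l)) C r hC hr hb
  rw [fconst_zero D.g i jj l]
  exact h

end AnalyticAux

section MatrixAux

lemma matrix_span_ne_top {j : ℕ} (hj : 3 ≤ j) (X Y : Matrix (Fin j) (Fin j) ℂ) :
    Submodule.span ℂ ({z : Matrix (Fin j) (Fin j) ℂ | ∃ i : ℕ, z = X ^ i}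
      ∪ {z | ∃ i : ℕ, z = Y * X ^ i}) ≠ ⊤ := by
  intro htop
  set P := Submodule.span ℂ (Set.range fun i : Fin j => X ^ (i:ℕ)) with hP
  have hXpow : ∀ m : ℕ, X ^ m ∈ P := by
    intro m
    induction m using Nat.strong_induction_on with
    | _ m ih =>
      by_cases hm : m < j
      · exact Submodule.subset_span ⟨⟨m, hm⟩, rfl⟩
      · push_neg at hm
        have hch := Matrix.aeval_self_charpoly X
        rw [Polynomial.aeval_eq_sum_range] at hch
        have hdeg : X.charpoly.natDegree = j := by
          rw [Matrix.charpoly_natDegree_eq_dim, Fintype.card_fin]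
        have hc1 : X.charpoly.coeff j = 1 := by
          have hm1 := X.charpoly_monic
          rw [Polynomial.Monic, Polynomial.leadingCoeff, hdeg] at hm1
          exact hm1
        rw [hdeg, Finset.sum_range_succ, hc1, one_smul] at hch
        have hXj : X ^ j = ∑ i ∈ Finset.range j, (-(X.charpoly.coeff i)) • X ^ i := by
          have := eq_neg_of_add_eq_zero_right hch
          rw [this, ← Finset.sum_neg_distrib]
          exact Finset.sum_congr rfl fun i _ => (neg_smul _ _).symm
        have hsplit : X ^ m = ∑ i ∈ Finset.range j, (-(X.charpoly.coeff i)) • X ^ (m - j + i) := by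
          have h1 : X ^ m = X ^ (m - j) * X ^ j := by
            rw [← pow_add]; congr 1; omega
          rw [h1, hXj, Finset.mul_sum]
          refine Finset.sum_congr rfl fun i _ => ?_
          rw [mul_smul_comm, ← pow_add]
        rw [hsplit]
        refine Submodule.sum_mem _ fun i hi => Submodule.smul_mem _ _ (ih _ ?_)
        have := Finset.mem_range.mp hi
        omega
  set Q := P.map (LinearMap.mulLeft ℂ Y) with hQ
  have hsub : ({z : Matrix (Fin j) (Fin j) ℂ | ∃ i : ℕ, z = X ^ i}
      ∪ {z | ∃ i : ℕ, z = Y * X ^ i}) ⊆ ↑(P ⊔ Q) := by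
    rintro z (⟨i, rfl⟩ | ⟨i, rfl⟩)
    · exact Submodule.mem_sup_left (hXpow i)
    · exact Submodule.mem_sup_right ⟨X ^ i, hXpow i, rfl⟩
  have hle : (⊤ : Submodule ℂ (Matrix (Fin j) (Fin j) ℂ)) ≤ P ⊔ Q :=
    htop ▸ Submodule.span_le.mpr hsub
  have hPQ : P ⊔ Q = ⊤ := top_le_iff.mp hle
  have h1 : Module.finrank ℂ P ≤ j := by
    have := finrank_span_le_card (R := ℂ) (Set.range fun i : Fin j => X ^ (i:ℕ))
    refine le_trans this ?_
    rw [Set.toFinset_range]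
    exact le_trans Finset.card_image_le (by simp)
  have h2 : Module.finrank ℂ Q ≤ Module.finrank ℂ P := Submodule.finrank_map_le _ _
  have h3 : Module.finrank ℂ (P ⊔ Q : Submodule ℂ (Matrix (Fin j) (Fin j) ℂ))
      ≤ Module.finrank ℂ P + Module.finrank ℂ Q := by
    have := Submodule.finrank_sup_add_finrank_inf_eq P Q
    omega
  have htoprk : Module.finrank ℂ (Matrix (Fin j) (Fin j) ℂ) = j * j := by
    rw [Module.finrank_matrix]; simp
  have hfr : Module.finrank ℂ (P ⊔ Q : Submodule ℂ (Matrix (Fin j) (Fin j) ℂ)) = j * j := by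
    rw [hPQ, finrank_top, htoprk]
  nlinarith [h1, h2, h3, hfr, hj]

end MatrixAux

/-- if `N = N_0` is spanned by `{x^i} ∪ {y * x^i}` and the semisimple algebra
`A` has a matrix algebra of size `j ≥ 3` as a quotient, then the deformation is not
strongly flat from `N` to `A`. -/
theorem not_strongly_flat_of_large_matrix_summand {n : ℕ} (hn : 1 ≤ n)
    (D : AnalyticDeformation n)
    (N0 : Type*) [Ring N0] [Algebra ℂ N0] (hN0 : RealizesAlgebra ℂ (fconst D.g 0) N0)
    (x y : N0)
    (hspan : Submodule.span ℂ
        ({z : N0 | ∃ i : ℕ, z = x ^ i} ∪ {z : N0 | ∃ i : ℕ, z = y * x ^ i}) = ⊤)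
    (A : Type*) [Ring A] [Algebra ℂ A] [IsSemisimpleRing A] [FiniteDimensional ℂ A]
    (hA : Module.finrank ℂ A = n)
    (j : ℕ) (hj : 3 ≤ j)
    (f : A →ₐ[ℂ] Matrix (Fin j) (Fin j) ℂ) (hf : Function.Surjective f) :
    ¬ D.StronglyFlat A := by
  intro hSF
  classical
  obtain ⟨e0, he0⟩ := hN0
  have hu0 : ∀ jj l, ∑ i, D.u i * fconst D.g 0 i jj l = if jj = l then (1:ℂ) else 0 :=
    fconst_unit D (definedAt_zero D)
  set a : Fin n → ℂ := fun i => e0.repr x i with ha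
  set bb : Fin n → ℂ := fun i => e0.repr y i with hbb
  have hxa : (∑ i, a i • e0 i) = x := e0.sum_repr x
  have hyb : (∑ i, bb i • e0 i) = y := e0.sum_repr y
  haveI : Module.Finite ℂ N0 := Module.Finite.of_basis e0
  obtain ⟨bs, hbsub, hbspan, hbind⟩ :=
    exists_linearIndependent ℂ
      ({z : N0 | ∃ i : ℕ, z = x ^ i} ∪ {z : N0 | ∃ i : ℕ, z = y * x ^ i})
  rw [hspan] at hbspan
  have hfin : bs.Finite := hbind.setFinite
  haveI := hfin.fintype
  have hrankN0 : Module.finrank ℂ N0 = n := by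
    rw [Module.finrank_eq_card_basis e0, Fintype.card_fin]
  have hcard : Fintype.card bs = n := by
    have h := finrank_span_set_eq_card hbind
    rw [hbspan, finrank_top, hrankN0] at h
    rw [← Set.toFinset_card]
    omega
  let eqv : Fin n ≃ bs := (Fintype.equivFinOfCardEq hcard).symm
  let w0 : Fin n → N0 := fun k => ((eqv k : N0))
  have hw0ind : LinearIndependent ℂ w0 := hbind.comp eqv eqv.injective
  have hw0range : Set.range w0 = bs := by
    have h : Set.range w0 = Subtype.val '' Set.range eqv := by
      rw [← Set.range_comp]; rfl
    rw [h, Equiv.range_eq_univ, Set.image_univ, Subtype.range_coe]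
  have hτex : ∀ k, ∃ t : ℕ ⊕ ℕ, w0 k = elemOf x y t := by
    intro k
    rcases hbsub (eqv k).2 with ⟨i, hi⟩ | ⟨i, hi⟩
    · exact ⟨.inl i, hi⟩
    · exact ⟨.inr i, hi⟩
  choose τ hτ using hτex
  let Mm : (Fin n → Fin n → Fin n → ℂ) → Matrix (Fin n) (Fin n) ℂ :=
    fun c => Matrix.of fun l k => colc D.u c a bb (τ k) l
  have hM0 : e0.toMatrix w0 = Mm (fconst D.g 0) := by
    have hw0 : w0 = fun k => elemOf (∑ i, a i • e0 i) (∑ i, bb i • e0 i) (τ k) := by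
      funext k; rw [hxa, hyb]; exact hτ k
    rw [hw0]
    exact toMatrix_eq e0 (fconst D.g 0) D.u he0 hu0 a bb τ
  have hdet0 : (Mm (fconst D.g 0)).det ≠ 0 := by
    have hIsU : IsUnit (e0.det w0) :=
      (Module.Basis.is_basis_iff_det e0).mp ⟨hw0ind, by rw [hw0range, hbspan]⟩
    rw [Module.Basis.det_apply, hM0] at hIsU
    exact IsUnit.ne_zero hIsU
  have hMdet : Continuous fun c : Fin n → Fin n → Fin n → ℂ => (Mm c).det := by
    apply Continuous.matrix_det
    apply continuous_matrix
    intro l k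
    exact (continuous_apply l).comp (continuous_colc D.u a bb (τ k))
  have htend : Filter.Tendsto (fun s : ℝ => (Mm (fconst D.g s)).det)
      (nhdsWithin 0 (Set.Ioi 0)) (nhds ((Mm (fconst D.g 0)).det)) :=
    (hMdet.tendsto _).comp (tendsto_fconst D)
  have hev : ∀ᶠ s in nhdsWithin (0:ℝ) (Set.Ioi 0), (Mm (fconst D.g s)).det ≠ 0 :=
    htend.eventually_ne hdet0
  obtain ⟨δ, hδ, hball⟩ := Metric.mem_nhdsWithin_iff.mp hev
  obtain ⟨s, hs0, hsδ, hdefS, eSex⟩ := hSF δ hδ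
  have hds : (Mm (fconst D.g s)).det ≠ 0 := by
    apply hball
    refine ⟨?_, hs0⟩
    rw [Metric.mem_ball, Real.dist_eq, sub_zero, abs_of_pos hs0]
    exact hsδ
  obtain ⟨eS, heS⟩ := eSex
  have hus := fconst_unit D hdefS
  set xA : A := ∑ i, a i • eS i with hxA
  set yA : A := ∑ i, bb i • eS i with hyA
  let wA : Fin n → A := fun k => elemOf xA yA (τ k)
  have hMs : eS.toMatrix wA = Mm (fconst D.g s) :=
    toMatrix_eq eS (fconst D.g s) D.u heS hus a bb τ
  obtain ⟨hindA, hspanA⟩ := (Module.Basis.is_basis_iff_det eS).mpr (by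
    rw [Module.Basis.det_apply, hMs]; exact isUnit_iff_ne_zero.mpr hds)
  set SA : Set A := ({z : A | ∃ i : ℕ, z = xA ^ i} ∪ {z : A | ∃ i : ℕ, z = yA * xA ^ i})
    with hSA
  have hspanSA : Submodule.span ℂ SA = ⊤ := by
    rw [eq_top_iff, ← hspanA]
    apply Submodule.span_mono
    rintro _ ⟨k, rfl⟩
    show wA k ∈ SA
    rcases htk : τ k with i | i
    · left; exact ⟨i, by simp only [wA, htk, elemOf]⟩
    · right; exact ⟨i, by simp only [wA, htk, elemOf]⟩
  set X := f xA with hX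
  set Y := f yA with hY
  have hspanM : Submodule.span ℂ ({z : Matrix (Fin j) (Fin j) ℂ | ∃ i : ℕ, z = X ^ i}
      ∪ {z : Matrix (Fin j) (Fin j) ℂ | ∃ i : ℕ, z = Y * X ^ i}) = ⊤ := by
    rw [eq_top_iff]
    rintro z -
    obtain ⟨w, rfl⟩ := hf z
    have hw : w ∈ Submodule.span ℂ SA := by rw [hspanSA]; trivial
    have hmem : f w ∈ (Submodule.span ℂ SA).map f.toLinearMap := ⟨w, hw, rfl⟩
    rw [Submodule.map_span] at hmem
    have himg : f.toLinearMap '' SA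
        ⊆ ({z : Matrix (Fin j) (Fin j) ℂ | ∃ i : ℕ, z = X ^ i}
          ∪ {z : Matrix (Fin j) (Fin j) ℂ | ∃ i : ℕ, z = Y * X ^ i}) := by
      rintro _ ⟨v, (⟨i, rfl⟩ | ⟨i, rfl⟩), rfl⟩
      · left
        exact ⟨i, by simp only [AlgHom.toLinearMap_apply, map_pow, hX]⟩
      · right
        exact ⟨i, by simp only [AlgHom.toLinearMap_apply, map_mul, map_pow, hX, hY]⟩
    exact Submodule.span_mono himg hmem
  exact matrix_span_ne_top hj X Y hspanM
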